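/- Any monotone subset S of ℝⁿ × ℝⁿ (i.e., (x'-x)·(y'-y) ≥ 0 for all (x,y),(x',y') ∈ S) is contained in the graph of a 1-Lipschitz function over the diagonal: there exists a 1-Lipschitz map G : ℝⁿ → ℝⁿ such that for all (x,y) ∈ S, y - x = G(x + y). -/

import Mathlib

open scoped RealInnerProductSpace
open Finset

section Aux

variable {E : Type*} [NormedAddCommGroup E] [InnerProductSpace ℝ E]

lemma aux_norm_sq_expand {ι : Type*} [Fintype ι] (w : ι → ℝ) (v : ι → E) :
    ‖∑ i, w i • v i‖ ^ 2 = ∑ i, ∑ j, w i * w j * ⟪v i, v j⟫ := by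
  rw [← real_inner_self_eq_norm_sq, sum_inner]
  refine Finset.sum_congr rfl fun i _ => ?_
  rw [real_inner_smul_left, inner_sum, Finset.mul_sum]
  refine Finset.sum_congr rfl fun j _ => ?_
  rw [real_inner_smul_right]; ring

/-- variance identity (double sum form) -/
lemma aux_double_sum {ι : Type*} [Fintype ι] (w : ι → ℝ) (hw : ∑ i, w i = 1) (v : ι → E) :
    ∑ i, ∑ j, w i * w j * ‖v i - v j‖ ^ 2
      = 2 * (∑ i, w i * ‖v i‖ ^ 2) - 2 * ‖∑ i, w i • v i‖ ^ 2 := by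
  have t1 : ∑ i, ∑ j, w i * w j * ‖v i‖ ^ 2 = ∑ i, w i * ‖v i‖ ^ 2 := by
    refine Finset.sum_congr rfl fun i _ => ?_
    calc ∑ j, w i * w j * ‖v i‖ ^ 2 = (∑ j, w j) * (w i * ‖v i‖ ^ 2) := by
          rw [Finset.sum_mul]; exact Finset.sum_congr rfl fun j _ => by ring
      _ = w i * ‖v i‖ ^ 2 := by rw [hw, one_mul]
  have t2 : ∑ i, ∑ j, w i * w j * ‖v j‖ ^ 2 = ∑ j, w j * ‖v j‖ ^ 2 := by
    rw [Finset.sum_comm]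
    refine Finset.sum_congr rfl fun j _ => ?_
    calc ∑ i, w i * w j * ‖v j‖ ^ 2 = (∑ i, w i) * (w j * ‖v j‖ ^ 2) := by
          rw [Finset.sum_mul]; exact Finset.sum_congr rfl fun i _ => by ring
      _ = w j * ‖v j‖ ^ 2 := by rw [hw, one_mul]
  calc ∑ i, ∑ j, w i * w j * ‖v i - v j‖ ^ 2
      = ∑ i, ∑ j, (w i * w j * ‖v i‖ ^ 2 + w i * w j * ‖v j‖ ^ 2
          - 2 * (w i * w j * ⟪v i, v j⟫)) := by
        refine Finset.sum_congr rfl fun i _ => Finset.sum_congr rfl fun j _ => ?_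
        rw [norm_sub_sq_real]; ring
    _ = (∑ i, ∑ j, w i * w j * ‖v i‖ ^ 2) + (∑ i, ∑ j, w i * w j * ‖v j‖ ^ 2)
          - 2 * (∑ i, ∑ j, w i * w j * ⟪v i, v j⟫) := by
        simp [Finset.sum_add_distrib, Finset.sum_sub_distrib, Finset.mul_sum]
    _ = 2 * (∑ i, w i * ‖v i‖ ^ 2) - 2 * ‖∑ i, w i • v i‖ ^ 2 := by
        rw [t1, t2, ← aux_norm_sq_expand w v]; ring

lemma aux_dist_sum {ι : Type*} [Fintype ι] (w : ι → ℝ) (hw : ∑ i, w i = 1) (v : ι → E) (x : E) :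
    ∑ i, w i * ‖x - v i‖ ^ 2
      = ‖x‖ ^ 2 - 2 * ⟪x, ∑ i, w i • v i⟫ + ∑ i, w i * ‖v i‖ ^ 2 := by
  have h1 : ∑ i, w i * ‖x - v i‖ ^ 2
      = ∑ i, (w i * ‖x‖ ^ 2 - 2 * (w i * ⟪x, v i⟫) + w i * ‖v i‖ ^ 2) := by
    refine Finset.sum_congr rfl fun i _ => ?_
    rw [norm_sub_sq_real]; ring
  rw [h1]
  have h2 : ⟪x, ∑ i, w i • v i⟫ = ∑ i, w i * ⟪x, v i⟫ := by
    rw [inner_sum]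
    exact Finset.sum_congr rfl fun i _ => real_inner_smul_right _ _ _
  rw [h2]
  rw [Finset.sum_add_distrib, Finset.sum_sub_distrib, ← Finset.sum_mul, hw, one_mul,
    ← Finset.mul_sum]

/-- Finite Kirszbraun-type ball intersection lemma. -/
lemma aux_key_finite {ι : Type*} [Fintype ι] [Nonempty ι]
    (xp yp : ι → E) (x : E) (hlip : ∀ i j, ‖yp i - yp j‖ ≤ ‖xp i - xp j‖) :
    ∃ y : E, ∀ i, ‖y - yp i‖ ≤ ‖x - xp i‖ := by
  classical
  set a : ι → ℝ := fun i => ‖yp i‖ ^ 2 - ‖x - xp i‖ ^ 2 with ha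
  set ψ : (ι → ℝ) → ℝ := fun c => (∑ i, c i * a i) - ‖∑ i, c i • yp i‖ ^ 2 with hψ
  have hcont : Continuous ψ := by fun_prop
  have hvertex : ∀ i : ι, (fun j => if j = i then (1:ℝ) else 0) ∈ stdSimplex ℝ ι := by
    intro i
    constructor
    · intro j; dsimp only; split <;> norm_num
    · simp
  obtain ⟨c, hcmem, hcmax⟩ := (isCompact_stdSimplex ℝ ι).exists_isMaxOn
    ⟨_, hvertex (Classical.arbitrary ι)⟩ hcont.continuousOn
  set yb := ∑ i, c i • yp i with hyb
  have hfo : ∀ i, ‖yb - yp i‖ ^ 2 ≤ ‖x - xp i‖ ^ 2 + ψ c := by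
    intro i
    set d := yp i - yb with hd
    have hD : ∀ t : ℝ, 0 < t → t ≤ 1 →
        a i - (∑ j, c j * a j) - 2 * ⟪yb, d⟫ ≤ t * ‖d‖ ^ 2 := by
      intro t ht0 ht1
      set ct : ι → ℝ := fun j => (1 - t) * c j + t * (if j = i then (1:ℝ) else 0) with hct
      have hctm : ct ∈ stdSimplex ℝ ι := by
        have := (convex_stdSimplex ℝ ι) hcmem (hvertex i)
          (by linarith : (0:ℝ) ≤ 1 - t) ht0.le (by ring)
        convert this using 1
        ext j; simp [hct]
      have h1 : ∑ j, ct j * a j = (1 - t) * (∑ j, c j * a j) + t * a i := by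
        have : ∀ j, ct j * a j = (1 - t) * (c j * a j) + t * ((if j = i then (1:ℝ) else 0) * a j) := by
          intro j; simp only [hct]; ring
        rw [Finset.sum_congr rfl fun j _ => this j, Finset.sum_add_distrib,
          ← Finset.mul_sum, ← Finset.mul_sum]
        congr 1
        congr 1
        simp
      have h2 : ∑ j, ct j • yp j = yb + t • d := by
        have : ∀ j, ct j • yp j = (1 - t) • (c j • yp j) + t • ((if j = i then (1:ℝ) else 0) • yp j) := by
          intro j; simp only [hct]; rw [add_smul]; rw [smul_smul, smul_smul]
        rw [Finset.sum_congr rfl fun j _ => this j, Finset.sum_add_distrib,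
          ← Finset.smul_sum, ← Finset.smul_sum]
        have h3 : ∑ j, (if j = i then (1:ℝ) else 0) • yp j = yp i := by
          simp [ite_smul]
        rw [h3, ← hyb, hd]
        rw [smul_sub, sub_smul, one_smul]
        abel
      have hle : ψ ct ≤ ψ c := hcmax hctm
      have hexp : ‖yb + t • d‖ ^ 2 = ‖yb‖ ^ 2 + 2 * (t * ⟪yb, d⟫) + t ^ 2 * ‖d‖ ^ 2 := by
        rw [norm_add_sq_real, real_inner_smul_right, norm_smul, mul_pow, Real.norm_eq_abs,
          sq_abs]
        try ring
      have hψct : ψ ct = (1 - t) * (∑ j, c j * a j) + t * a i - ‖yb + t • d‖ ^ 2 := by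
        simp only [hψ]; rw [h1, h2]
      have hψc' : ψ c = (∑ j, c j * a j) - ‖yb‖ ^ 2 := rfl
      rw [hψct, hexp, hψc'] at hle
      have : t * (a i - (∑ j, c j * a j) - 2 * ⟪yb, d⟫) ≤ t * (t * ‖d‖ ^ 2) := by nlinarith
      exact le_of_mul_le_mul_left this ht0
    have hD0 : a i - (∑ j, c j * a j) - 2 * ⟪yb, d⟫ ≤ 0 := by
      by_contra hcon
      push_neg at hcon
      set D := a i - (∑ j, c j * a j) - 2 * ⟪yb, d⟫ with hDdef
      have hQ : (0:ℝ) ≤ ‖d‖ ^ 2 := by positivity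
      have hden : (0:ℝ) < 2 * ‖d‖ ^ 2 + 2 := by linarith
      set t := min 1 (D / (2 * ‖d‖ ^ 2 + 2)) with htdef
      have ht0 : 0 < t := lt_min one_pos (div_pos hcon hden)
      have ht1 : t ≤ 1 := min_le_left _ _
      have h1 := hD t ht0 ht1
      have h2 : t ≤ D / (2 * ‖d‖ ^ 2 + 2) := min_le_right _ _
      have h3 : t * ‖d‖ ^ 2 ≤ (D / (2 * ‖d‖ ^ 2 + 2)) * ‖d‖ ^ 2 :=
        mul_le_mul_of_nonneg_right h2 hQ
      have h4 : (D / (2 * ‖d‖ ^ 2 + 2)) * (2 * ‖d‖ ^ 2 + 2) = D := by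
        field_simp
      nlinarith [div_pos hcon hden]
    have hnorm : ‖yb - yp i‖ ^ 2 = ‖yb‖ ^ 2 - 2 * ⟪yb, yp i⟫ + ‖yp i‖ ^ 2 :=
      norm_sub_sq_real _ _
    have hinner : ⟪yb, d⟫ = ⟪yb, yp i⟫ - ‖yb‖ ^ 2 := by
      rw [hd, inner_sub_right, real_inner_self_eq_norm_sq]
    have hψc' : ψ c = (∑ j, c j * a j) - ‖yb‖ ^ 2 := rfl
    have hai : a i = ‖yp i‖ ^ 2 - ‖x - xp i‖ ^ 2 := rfl
    linarith
  have hψc : ψ c ≤ 0 := by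
    have hw1 : ∑ i, c i = 1 := hcmem.2
    have hy := aux_double_sum c hw1 yp
    have hx := aux_double_sum c hw1 xp
    have hterm : ∑ i, ∑ j, c i * c j * ‖yp i - yp j‖ ^ 2
        ≤ ∑ i, ∑ j, c i * c j * ‖xp i - xp j‖ ^ 2 := by
      refine Finset.sum_le_sum fun i _ => Finset.sum_le_sum fun j _ => ?_
      have hsq : ‖yp i - yp j‖ ^ 2 ≤ ‖xp i - xp j‖ ^ 2 := by
        nlinarith [hlip i j, norm_nonneg (yp i - yp j), norm_nonneg (xp i - xp j)]
      have := mul_nonneg (hcmem.1 i) (hcmem.1 j)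
      nlinarith
    have hr := aux_dist_sum c hw1 xp x
    have hxx : ‖x - ∑ i, c i • xp i‖ ^ 2
        = ‖x‖ ^ 2 - 2 * ⟪x, ∑ i, c i • xp i⟫ + ‖∑ i, c i • xp i‖ ^ 2 := norm_sub_sq_real _ _
    have hsplit : ∑ i, c i * a i = ∑ i, c i * ‖yp i‖ ^ 2 - ∑ i, c i * ‖x - xp i‖ ^ 2 := by
      rw [← Finset.sum_sub_distrib]
      exact Finset.sum_congr rfl fun i _ => by rw [ha]; ring
    have hψc' : ψ c = (∑ j, c j * a j) - ‖yb‖ ^ 2 := rfl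
    have hpos : (0:ℝ) ≤ ‖x - ∑ i, c i • xp i‖ ^ 2 := by positivity
    rw [hψc', hsplit, ← hyb] at *
    linarith
  refine ⟨yb, fun i => ?_⟩
  have h1 := hfo i
  nlinarith [norm_nonneg (yb - yp i), norm_nonneg (x - xp i)]

end Aux

section Key

variable {E : Type*} [NormedAddCommGroup E] [InnerProductSpace ℝ E] [FiniteDimensional ℝ E]

/-- General ball intersection lemma for a 1-Lipschitz relation. -/
lemma aux_key_inter (A : Set (E × E))
    (hA : ∀ p ∈ A, ∀ q ∈ A, ‖p.2 - q.2‖ ≤ ‖p.1 - q.1‖) (x : E) :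
    ∃ y : E, ∀ p ∈ A, ‖y - p.2‖ ≤ ‖x - p.1‖ := by
  classical
  rcases A.eq_empty_or_nonempty with rfl | ⟨p₀, hp₀⟩
  · exact ⟨0, by simp⟩
  set t : A → Set E := fun p => Metric.closedBall (p : E × E).2 (dist x (p : E × E).1) with htdef
  have hne : (Metric.closedBall p₀.2 (dist x p₀.1) ∩ ⋂ p, t p).Nonempty := by
    apply (isCompact_closedBall _ _).inter_iInter_nonempty t
      (fun p => Metric.isClosed_closedBall)
    intro u
    have hnon : Nonempty ↥(insert (⟨p₀, hp₀⟩ : A) u) :=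
      ⟨⟨⟨p₀, hp₀⟩, Finset.mem_insert_self _ _⟩⟩
    obtain ⟨y, hy⟩ := aux_key_finite (ι := ↥(insert (⟨p₀, hp₀⟩ : A) u))
      (fun q => ((q : A) : E × E).1) (fun q => ((q : A) : E × E).2) x
      (fun i j => hA _ (i : A).2 _ (j : A).2)
    refine ⟨y, ?_, ?_⟩
    · have := hy ⟨⟨p₀, hp₀⟩, Finset.mem_insert_self _ _⟩
      simpa [Metric.mem_closedBall, dist_eq_norm] using this
    · simp only [Set.mem_iInter₂]
      intro p hp
      have := hy ⟨p, Finset.mem_insert_of_mem hp⟩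
      simpa [htdef, Metric.mem_closedBall, dist_eq_norm] using this
  obtain ⟨y, _, hyi⟩ := hne
  refine ⟨y, fun p hp => ?_⟩
  have := Set.mem_iInter.1 hyi ⟨p, hp⟩
  simpa [htdef, Metric.mem_closedBall, dist_eq_norm] using this

omit [FiniteDimensional ℝ E] in
lemma aux_minty {x x' y y' : E} (h : 0 ≤ ⟪x' - x, y' - y⟫) :
    ‖(y' - x') - (y - x)‖ ≤ ‖(x' + y') - (x + y)‖ := by
  have e1 : (y' - x') - (y - x) = (y' - y) - (x' - x) := by abel
  have e2 : (x' + y') - (x + y) = (x' - x) + (y' - y) := by abel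
  rw [e1, e2]
  have h1 := norm_sub_sq_real (y' - y) (x' - x)
  have h2 := norm_add_sq_real (x' - x) (y' - y)
  have h3 := real_inner_comm (y' - y) (x' - x)
  nlinarith [norm_nonneg ((y' - y) - (x' - x)), norm_nonneg ((x' - x) + (y' - y))]

end Key

theorem monotone_set_in_lipschitz_graph (n : ℕ)
    (S : Set (EuclideanSpace ℝ (Fin n) × EuclideanSpace ℝ (Fin n)))
    (hmono : ∀ p ∈ S, ∀ q ∈ S, ⟪q.1 - p.1, q.2 - p.2⟫ ≥ 0) :
    ∃ G : EuclideanSpace ℝ (Fin n) → EuclideanSpace ℝ (Fin n),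
      LipschitzWith 1 G ∧ ∀ p ∈ S, p.2 - p.1 = G (p.1 + p.2) := by
  classical
  set Lip : Set (EuclideanSpace ℝ (Fin n) × EuclideanSpace ℝ (Fin n)) → Prop :=
    fun Γ => ∀ p ∈ Γ, ∀ q ∈ Γ, ‖p.2 - q.2‖ ≤ ‖p.1 - q.1‖ with hLip
  set Γ₀ : Set (EuclideanSpace ℝ (Fin n) × EuclideanSpace ℝ (Fin n)) := (fun p : EuclideanSpace ℝ (Fin n) × EuclideanSpace ℝ (Fin n) => (p.1 + p.2, p.2 - p.1)) '' S with hΓ₀def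
  have hΓ₀ : Lip Γ₀ := by
    rintro _ ⟨p, hp, rfl⟩ _ ⟨q, hq, rfl⟩
    exact aux_minty (by simpa using hmono q hq p hp)
  set C : Set (Set (EuclideanSpace ℝ (Fin n) × EuclideanSpace ℝ (Fin n))) := {Γ | Γ₀ ⊆ Γ ∧ Lip Γ} with hC
  have hzorn : ∃ M, Γ₀ ⊆ M ∧ Maximal (· ∈ C) M := by
    apply zorn_subset_nonempty
    · intro c hcC hchain hcne
      refine ⟨⋃₀ c, ⟨?_, ?_⟩, fun s hs => Set.subset_sUnion_of_mem hs⟩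
      · obtain ⟨Γ, hΓ⟩ := hcne
        exact (hcC hΓ).1.trans (Set.subset_sUnion_of_mem hΓ)
      · rintro p ⟨Γ1, hΓ1, hp⟩ q ⟨Γ2, hΓ2, hq⟩
        rcases hchain.total hΓ1 hΓ2 with h | h
        · exact (hcC hΓ2).2 p (h hp) q hq
        · exact (hcC hΓ1).2 p hp q (h hq)
    · exact ⟨Set.Subset.refl _, hΓ₀⟩
  obtain ⟨M, hM0, hMmax⟩ := hzorn
  have hMLip : Lip M := hMmax.1.2
  have htotal : ∀ z : EuclideanSpace ℝ (Fin n), ∃ w, (z, w) ∈ M := by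
    intro z
    by_contra hcon
    push_neg at hcon
    obtain ⟨y, hy⟩ := aux_key_inter M hMLip z
    have hmem : insert (z, y) M ∈ C := by
      constructor
      · exact hMmax.1.1.trans (Set.subset_insert _ _)
      · rintro p (rfl | hp) q (rfl | hq)
        · simp
        · exact hy q hq
        · rw [norm_sub_rev, norm_sub_rev (p.1) _]
          exact hy p hp
        · exact hMLip p hp q hq
    have := hMmax.2 hmem (Set.subset_insert _ _)
    exact hcon y (this (Set.mem_insert _ _))
  choose G hG using htotal
  have hfun : ∀ z w, (z, w) ∈ M → w = G z := by
    intro z w hw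
    have := hMLip (z, w) hw (z, G z) (hG z)
    simp only [sub_self, norm_zero] at this
    have : ‖w - G z‖ = 0 := le_antisymm (by simpa using this) (norm_nonneg _)
    simpa [sub_eq_zero] using (norm_eq_zero.mp this)
  refine ⟨G, ?_, ?_⟩
  · apply LipschitzWith.of_dist_le_mul
    intro a b
    rw [NNReal.coe_one, one_mul, dist_eq_norm, dist_eq_norm]
    exact hMLip (a, G a) (hG a) (b, G b) (hG b)
  · intro p hp
    exact hfun _ _ (hM0 ⟨p, hp, rfl⟩)
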